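/- Let k ≥ 1 and β > β⁻ ≥ 1 be integers, let 𝒫 = 𝒬 = {0,…,β}^k, and let E_LP be the set of triples (p,q,j) ∈ 𝒫 × 𝒬 × [k] with ∑_{i=1}^{j}(p_i + q_i) ≤ β. Let H be a bipartite (β,k)-HEDCS with vertex parts P and Q, with P nonempty, having at least β⁻·|P|/2 edges. Then there exist nonnegative reals x(p,q,j) for (p,q,j) ∈ E_LP, n_P(p) for p ∈ 𝒫, and n_Q(q) for q ∈ 𝒬 such that: (1) n_P(p)·p_j = ∑_{q : (p,q,j) ∈ E_LP} x(p,q,j) for all p ∈ 𝒫 and j ∈ [k]; (2) n_Q(q)·q_j = ∑_{p : (p,q,j) ∈ E_LP} x(p,q,j) for all q ∈ 𝒬 and j ∈ [k]; (3) ∑_{p ∈ 𝒫} n_P(p) = 1; (4) ∑_{(p,q,j) ∈ E_LP} x(p,q,j) ≥ β⁻/2; and (5) ∑_{q ∈ 𝒬} n_Q(q) = |Q|/|P|. In particular, |Q|/|P| is the objective value of a feasible solution of the factor-revealing linear program LP(k,β,β⁻), so f(k,β,β⁻) ≥ LP(k,β,β⁻). -/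

import Mathlib

open Finset

variable {V : Type*} [DecidableEq V]

/-- Degree of a vertex in an edge set. -/
def deg (E : Finset (Sym2 V)) (v : V) : ℕ := (E.filter (fun e => v ∈ e)).card

/-- Edge-degree: the sum of the degrees of the two endpoints. -/
def edeg (E : Finset (Sym2 V)) (e : Sym2 V) : ℕ :=
  Sym2.lift ⟨fun u v => deg E u + deg E v, fun _ _ => add_comm _ _⟩ e

/-- Generalized `(β,β⁻,k)`-HEDCS of `G`: a hierarchical decomposition
`∅ = H_0 ⊆ H_1 ⊆ … ⊆ H_k = Hs` with edge-degrees in `H_i` of new edges at most `β`,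
and every edge of `G` outside `Hs` has edge-degree at least `β⁻` in `Hs`. -/
def IsHEDCSgen (G Hs : Finset (Sym2 V)) (β βm k : ℕ) : Prop :=
  Hs ⊆ G ∧ ∃ H : ℕ → Finset (Sym2 V),
    H 0 = ∅ ∧ H k = Hs ∧
    (∀ i < k, H i ⊆ H (i + 1)) ∧
    (∀ i, 1 ≤ i → i ≤ k → ∀ e ∈ H i \ H (i - 1), edeg (H i) e ≤ β) ∧
    (∀ e ∈ G \ Hs, βm ≤ edeg Hs e)

/-- `(β,k)`-HEDCS of `G`. -/
def IsHEDCS (G Hs : Finset (Sym2 V)) (β k : ℕ) : Prop :=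
  IsHEDCSgen G Hs β (β - 1) k

/-- Bipartite `(β,k)`-HEDCS with vertex parts `P` and `Q`
(the base graph is `Hs` itself, so the second HEDCS condition is vacuous). -/
def IsBipartiteHEDCS (P Q : Finset V) (Hs : Finset (Sym2 V)) (β k : ℕ) : Prop :=
  Disjoint P Q ∧
  (∀ e ∈ Hs, ∃ u v, e = s(u, v) ∧ u ∈ P ∧ v ∈ Q) ∧
  ∃ H : ℕ → Finset (Sym2 V),
    H 0 = ∅ ∧ H k = Hs ∧
    (∀ i < k, H i ⊆ H (i + 1)) ∧
    (∀ i, 1 ≤ i → i ≤ k → ∀ e ∈ H i \ H (i - 1), edeg (H i) e ≤ β)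

/-- A matching: a set of pairwise vertex-disjoint (non-loop) edges. -/
def IsMatching (M : Finset (Sym2 V)) : Prop :=
  (∀ e ∈ M, ¬ e.IsDiag) ∧
  ∀ e ∈ M, ∀ f ∈ M, e ≠ f → ∀ v : V, v ∈ e → v ∉ f

/-- The maximum matching size of the edge set `E`. -/
noncomputable def matchNum (E : Finset (Sym2 V)) : ℕ :=
  sSup {n : ℕ | ∃ M : Finset (Sym2 V), M ⊆ E ∧ IsMatching M ∧ M.card = n}


section Aux
variable {V : Type*} [DecidableEq V]

lemma edeg_mk (E : Finset (Sym2 V)) (a b : V) : edeg E s(a,b) = deg E a + deg E b := rfl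

lemma deg_le_edeg {E : Finset (Sym2 V)} {e : Sym2 V} {v : V} (hv : v ∈ e) :
    deg E v ≤ edeg E e := by
  induction e using Sym2.ind with
  | _ a b =>
    rw [Sym2.mem_iff] at hv
    rcases hv with rfl | rfl <;> rw [edeg_mk] <;> omega

lemma deg_bound (H : ℕ → Finset (Sym2 V)) (β k : ℕ)
    (hH0 : H 0 = ∅)
    (hmono : ∀ i < k, H i ⊆ H (i + 1))
    (hdeg : ∀ i, 1 ≤ i → i ≤ k → ∀ e ∈ H i \ H (i - 1), edeg (H i) e ≤ β) :
    ∀ i ≤ k, ∀ v, deg (H i) v ≤ β := by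
  intro i
  induction i with
  | zero => intro _ v; simp [hH0, deg]
  | succ m ih =>
    intro hm v
    by_cases hnew : ∃ e ∈ H (m+1), v ∈ e ∧ e ∉ H m
    · obtain ⟨e, he, hv, hne⟩ := hnew
      have hb := hdeg (m+1) (by omega) hm e (by simp [he, hne])
      exact le_trans (deg_le_edeg hv) hb
    · push_neg at hnew
      have hle : deg (H (m+1)) v ≤ deg (H m) v := by
        apply Finset.card_le_card
        intro e he
        simp only [Finset.mem_filter] at he ⊢
        exact ⟨hnew e he.1 he.2, he.2⟩
      exact hle.trans (ih (by omega) v)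

end Aux

set_option maxHeartbeats 2000000 in
/-- From a bipartite `(β,k)`-HEDCS with parts `P` (nonempty), `Q` and at
least `β⁻·|P|/2` edges, one obtains a feasible solution `(x, n_P, n_Q)` of the
factor-revealing LP `LP(k,β,β⁻)` whose objective value is `|Q|/|P|`.
Degree profiles are indexed by `Fin k → Fin (β+1)` (vectors in `{0,…,β}^k`), and
`(p,q,j) ∈ E_LP` means `∑_{i ≤ j} (p_i + q_i) ≤ β`. -/
theorem hedcs_lp_feasible {V : Type*} [DecidableEq V]
    (β βm k : ℕ) (hk : 1 ≤ k) (hβ : βm < β) (hβm : 1 ≤ βm)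
    (P Q : Finset V) (Hs : Finset (Sym2 V)) (hP : P.Nonempty)
    (hH : IsBipartiteHEDCS P Q Hs β k)
    (hcard : (βm : ℝ) * P.card / 2 ≤ (Hs.card : ℝ)) :
    ∃ (x : (Fin k → Fin (β + 1)) → (Fin k → Fin (β + 1)) → Fin k → ℝ)
      (nP nQ : (Fin k → Fin (β + 1)) → ℝ),
      -- nonnegativity of all variables
      (∀ p q j, 0 ≤ x p q j) ∧ (∀ p, 0 ≤ nP p) ∧ (∀ q, 0 ≤ nQ q) ∧
      -- `x` is supported on `E_LP`
      (∀ p q j, ¬ (∑ i ∈ Finset.univ.filter (· ≤ j), ((p i : ℕ) + (q i : ℕ)) ≤ β) →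
        x p q j = 0) ∧
      -- constraint (1)
      (∀ p j, nP p * ((p j : ℕ) : ℝ) =
        ∑ q ∈ Finset.univ.filter
            (fun q => ∑ i ∈ Finset.univ.filter (· ≤ j), ((p i : ℕ) + (q i : ℕ)) ≤ β),
          x p q j) ∧
      -- constraint (2)
      (∀ q j, nQ q * ((q j : ℕ) : ℝ) =
        ∑ p ∈ Finset.univ.filter
            (fun p => ∑ i ∈ Finset.univ.filter (· ≤ j), ((p i : ℕ) + (q i : ℕ)) ≤ β),
          x p q j) ∧
      -- constraint (3)
      (∑ p, nP p = 1) ∧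
      -- constraint (4)
      ((βm : ℝ) / 2 ≤
        ∑ p, ∑ q, ∑ j ∈ Finset.univ.filter
            (fun j => ∑ i ∈ Finset.univ.filter (· ≤ j), ((p i : ℕ) + (q i : ℕ)) ≤ β),
          x p q j) ∧
      -- objective value (5)
      (∑ q, nQ q = (Q.card : ℝ) / (P.card : ℝ)) := by
  classical
  obtain ⟨hdisj, hbip, H, hH0, hHk, hmono, hdeg⟩ := hH
  have hn0 : 0 < P.card := hP.card_pos
  have hnR : (0:ℝ) < (P.card : ℝ) := by exact_mod_cast hn0
  -- the chain is increasing
  have hchain2 : ∀ j ≤ k, ∀ i ≤ j, H i ⊆ H j := by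
    intro j hj
    induction j with
    | zero =>
      intro i hi
      have hi0 : i = 0 := by omega
      subst hi0; exact Finset.Subset.refl _
    | succ m ih =>
      intro i hi
      rcases Nat.lt_or_ge i (m+1) with h | h
      · exact (ih (by omega) i (by omega)).trans (hmono m (by omega))
      · have : i = m + 1 := by omega
        subst this; exact Finset.Subset.refl _
  have hchain : ∀ i ≤ k, H i ⊆ Hs := fun i hi => hHk ▸ hchain2 k le_rfl i hi
  have hbound : ∀ i ≤ k, ∀ v, deg (H i) v ≤ β := deg_bound H β k hH0 hmono hdeg
  have hPQ : ∀ {u v : V}, u ∈ P → v ∈ Q → u ≠ v :=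
    fun hu hv h => Finset.disjoint_left.mp hdisj hu (h ▸ hv)
  have hlt : ∀ (v : V) (j : Fin k), deg (H ((j:ℕ)+1)) v - deg (H (j:ℕ)) v < β + 1 := by
    intro v j
    have := hbound ((j:ℕ)+1) (by omega) v
    omega
  set prof : V → Fin k → Fin (β+1) := fun v j => ⟨_, hlt v j⟩ with hprofdef
  have hprof : ∀ (v : V) (j : Fin k),
      (prof v j : ℕ) = deg (H ((j:ℕ)+1)) v - deg (H (j:ℕ)) v := fun _ _ => rfl
  have hdmono : ∀ i < k, ∀ v, deg (H i) v ≤ deg (H (i+1)) v :=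
    fun i hi v => Finset.card_le_card (Finset.filter_subset_filter _ (hmono i hi))
  have htel0 : ∀ m ≤ k, ∀ v,
      ∑ i ∈ Finset.range m, (deg (H (i+1)) v - deg (H i) v) = deg (H m) v := by
    intro m hm v
    induction m with
    | zero => simp [hH0, deg]
    | succ a ih =>
      rw [Finset.sum_range_succ, ih (by omega)]
      have := hdmono a (by omega) v
      omega
  have htel : ∀ (v : V) (j : Fin k),
      ∑ i ∈ Finset.univ.filter (· ≤ j), ((prof v i : ℕ)) = deg (H ((j:ℕ)+1)) v := by
    intro v j
    have h1 : ∑ i ∈ Finset.univ.filter (· ≤ j), ((prof v i : ℕ))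
        = ∑ i : Fin k, (fun m : ℕ =>
            if m ≤ (j:ℕ) then deg (H (m+1)) v - deg (H m) v else 0) (i : ℕ) := by
      rw [Finset.sum_filter]
      refine Finset.sum_congr rfl fun i _ => ?_
      simp only [hprof, Fin.le_def]
    rw [h1, Fin.sum_univ_eq_sum_range
      (fun m : ℕ => if m ≤ (j:ℕ) then deg (H (m+1)) v - deg (H m) v else 0) k,
      ← Finset.sum_filter]
    have h2 : (Finset.range k).filter (· ≤ (j:ℕ)) = Finset.range ((j:ℕ)+1) := by
      ext a
      simp only [Finset.mem_filter, Finset.mem_range]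
      have := j.isLt
      omega
    rw [h2, htel0 ((j:ℕ)+1) (by omega) v]
  -- edges added in round j have small profile sums
  have hsum2 : ∀ (u v : V) (j : Fin k), s(u,v) ∈ H ((j:ℕ)+1) \ H (j:ℕ) →
      ∑ i ∈ Finset.univ.filter (· ≤ j), ((prof u i : ℕ) + (prof v i : ℕ)) ≤ β := by
    intro u v j he
    have hd := hdeg ((j:ℕ)+1) (by omega) (by omega) s(u,v) (by simpa using he)
    rw [Finset.sum_add_distrib, htel, htel]
    rw [edeg_mk] at hd
    exact hd
  -- degree formulas
  have hdegP : ∀ u ∈ P, ∀ i ≤ k, deg (H i) u = (Q.filter fun v => s(u,v) ∈ H i).card := by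
    intro u hu i hik
    rw [deg]
    refine (Finset.card_bij (fun v _ => s(u,v)) ?_ ?_ ?_).symm
    · intro v hv
      simp only [Finset.mem_filter] at hv ⊢
      exact ⟨hv.2, Sym2.mem_mk_left u v⟩
    · intro v1 h1 v2 h2 heq
      exact Sym2.congr_right.mp heq
    · intro e he
      simp only [Finset.mem_filter] at he
      obtain ⟨a, b, rfl, ha, hb⟩ := hbip _ (hchain i hik he.1)
      have hm := he.2
      rw [Sym2.mem_iff] at hm
      rcases hm with rfl | rfl
      · exact ⟨b, Finset.mem_filter.mpr ⟨hb, he.1⟩, rfl⟩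
      · exact absurd hb (Finset.disjoint_left.mp hdisj hu)
  have hdegQ : ∀ v ∈ Q, ∀ i ≤ k, deg (H i) v = (P.filter fun u => s(u,v) ∈ H i).card := by
    intro v hv i hik
    rw [deg]
    refine (Finset.card_bij (fun u _ => s(u,v)) ?_ ?_ ?_).symm
    · intro u hu
      simp only [Finset.mem_filter] at hu ⊢
      exact ⟨hu.2, Sym2.mem_mk_right u v⟩
    · intro u1 h1 u2 h2 heq
      exact Sym2.congr_left.mp heq
    · intro e he
      simp only [Finset.mem_filter] at he
      obtain ⟨a, b, rfl, ha, hb⟩ := hbip _ (hchain i hik he.1)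
      have hm := he.2
      rw [Sym2.mem_iff] at hm
      rcases hm with rfl | rfl
      · exact absurd hv (Finset.disjoint_left.mp hdisj ha)
      · exact ⟨a, Finset.mem_filter.mpr ⟨ha, he.1⟩, rfl⟩
  -- increment formulas
  have hincP : ∀ u ∈ P, ∀ j : Fin k,
      (prof u j : ℕ) = (Q.filter fun v => s(u,v) ∈ H ((j:ℕ)+1) \ H (j:ℕ)).card := by
    intro u hu j
    rw [hprof, hdegP u hu ((j:ℕ)+1) (by omega), hdegP u hu (j:ℕ) (le_of_lt j.isLt)]
    have hsub : Q.filter (fun v => s(u,v) ∈ H (j:ℕ))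
        ⊆ Q.filter (fun v => s(u,v) ∈ H ((j:ℕ)+1)) :=
      Finset.monotone_filter_right Q (fun v _ hv => hmono (j:ℕ) j.isLt hv)
    rw [← Finset.card_sdiff_of_subset hsub]
    congr 1
    ext v
    simp only [Finset.mem_sdiff, Finset.mem_filter]
    tauto
  have hincQ : ∀ v ∈ Q, ∀ j : Fin k,
      (prof v j : ℕ) = (P.filter fun u => s(u,v) ∈ H ((j:ℕ)+1) \ H (j:ℕ)).card := by
    intro v hv j
    rw [hprof, hdegQ v hv ((j:ℕ)+1) (by omega), hdegQ v hv (j:ℕ) (le_of_lt j.isLt)]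
    have hsub : P.filter (fun u => s(u,v) ∈ H (j:ℕ))
        ⊆ P.filter (fun u => s(u,v) ∈ H ((j:ℕ)+1)) :=
      Finset.monotone_filter_right P (fun u _ hu => hmono (j:ℕ) j.isLt hu)
    rw [← Finset.card_sdiff_of_subset hsub]
    congr 1
    ext u
    simp only [Finset.mem_sdiff, Finset.mem_filter]
    tauto
  -- the counts
  set cP : (Fin k → Fin (β+1)) → ℕ := fun p => (P.filter fun v => prof v = p).card with hcP
  set cQ : (Fin k → Fin (β+1)) → ℕ := fun q => (Q.filter fun v => prof v = q).card with hcQ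
  set cX : (Fin k → Fin (β+1)) → (Fin k → Fin (β+1)) → Fin k → ℕ := fun p q j =>
    ((P ×ˢ Q).filter fun uv => s(uv.1, uv.2) ∈ H ((j:ℕ)+1) \ H (j:ℕ)
      ∧ prof uv.1 = p ∧ prof uv.2 = q).card with hcX
  -- totals of nP, nQ counts
  have hA : ∑ p, cP p = P.card :=
    (Finset.card_eq_sum_card_fiberwise (fun x _ => Finset.mem_univ (prof x))).symm
  have hB : ∑ q, cQ q = Q.card :=
    (Finset.card_eq_sum_card_fiberwise (fun x _ => Finset.mem_univ (prof x))).symm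
  -- support of x
  have hXsupp : ∀ p q (j : Fin k),
      ¬ (∑ i ∈ Finset.univ.filter (· ≤ j), ((p i : ℕ) + (q i : ℕ)) ≤ β) → cX p q j = 0 := by
    intro p q j hcond
    rw [hcX, Finset.card_eq_zero, Finset.filter_eq_empty_iff]
    rintro ⟨u, v⟩ hmem ⟨hedge, hp, hq⟩
    exact hcond (by rw [← hp, ← hq]; exact hsum2 u v j hedge)
  -- nat constraint (1)
  have hC1 : ∀ p (j : Fin k), cP p * (p j : ℕ) = ∑ q, cX p q j := by
    intro p j
    have hrhs : ∑ q, cX p q j = ∑ u ∈ P, ∑ v ∈ Q, ∑ q,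
        (if s(u,v) ∈ H ((j:ℕ)+1) \ H (j:ℕ) ∧ prof u = p ∧ prof v = q
          then (1:ℕ) else 0) := by
      rw [hcX]
      simp only [Finset.card_filter, Finset.sum_product]
      rw [Finset.sum_comm]
      exact Finset.sum_congr rfl fun u _ => Finset.sum_comm
    rw [hrhs]
    have hq1 : ∀ u v, ∑ q, (if s(u,v) ∈ H ((j:ℕ)+1) \ H (j:ℕ) ∧ prof u = p ∧ prof v = q
        then (1:ℕ) else 0)
        = if s(u,v) ∈ H ((j:ℕ)+1) \ H (j:ℕ) ∧ prof u = p then 1 else 0 := by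
      intro u v
      by_cases hC : s(u,v) ∈ H ((j:ℕ)+1) \ H (j:ℕ) ∧ prof u = p
      · simp [hC.1, hC.2, Finset.sum_ite_eq]
      · rw [if_neg hC]
        refine Finset.sum_eq_zero fun q _ => if_neg ?_
        rintro ⟨h1, h2, h3⟩; exact hC ⟨h1, h2⟩
    simp only [hq1]
    have hv1 : ∀ u ∈ P, ∑ v ∈ Q, (if s(u,v) ∈ H ((j:ℕ)+1) \ H (j:ℕ) ∧ prof u = p
        then (1:ℕ) else 0) = if prof u = p then (p j : ℕ) else 0 := by
      intro u hu
      by_cases hp : prof u = p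
      · rw [if_pos hp]
        have : ∀ v ∈ Q, (if s(u,v) ∈ H ((j:ℕ)+1) \ H (j:ℕ) ∧ prof u = p then (1:ℕ) else 0)
            = if s(u,v) ∈ H ((j:ℕ)+1) \ H (j:ℕ) then 1 else 0 := by
          intro v _
          by_cases hE : s(u,v) ∈ H ((j:ℕ)+1) \ H (j:ℕ) <;> simp [hE, hp]
        rw [Finset.sum_congr rfl this, ← Finset.card_filter, ← hincP u hu j, hp]
      · rw [if_neg hp]
        refine Finset.sum_eq_zero fun v _ => if_neg ?_
        rintro ⟨h1, h2⟩; exact hp h2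
    rw [Finset.sum_congr rfl hv1, ← Finset.sum_filter, Finset.sum_const, smul_eq_mul, hcP]
  -- nat constraint (2)
  have hC2 : ∀ q (j : Fin k), cQ q * (q j : ℕ) = ∑ p, cX p q j := by
    intro q j
    have hrhs : ∑ p, cX p q j = ∑ v ∈ Q, ∑ u ∈ P, ∑ p,
        (if s(u,v) ∈ H ((j:ℕ)+1) \ H (j:ℕ) ∧ prof u = p ∧ prof v = q
          then (1:ℕ) else 0) := by
      rw [hcX]
      simp only [Finset.card_filter, Finset.sum_product]
      rw [Finset.sum_comm]
      refine (Finset.sum_congr rfl fun u _ => Finset.sum_comm).trans ?_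
      exact Finset.sum_comm
    rw [hrhs]
    have hp1 : ∀ u v, ∑ p, (if s(u,v) ∈ H ((j:ℕ)+1) \ H (j:ℕ) ∧ prof u = p ∧ prof v = q
        then (1:ℕ) else 0)
        = if s(u,v) ∈ H ((j:ℕ)+1) \ H (j:ℕ) ∧ prof v = q then 1 else 0 := by
      intro u v
      by_cases hC : s(u,v) ∈ H ((j:ℕ)+1) \ H (j:ℕ) ∧ prof v = q
      · simp [hC.1, hC.2, Finset.sum_ite_eq]
      · rw [if_neg hC]
        refine Finset.sum_eq_zero fun p _ => if_neg ?_
        rintro ⟨h1, h2, h3⟩; exact hC ⟨h1, h3⟩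
    simp only [hp1]
    have hu1 : ∀ v ∈ Q, ∑ u ∈ P, (if s(u,v) ∈ H ((j:ℕ)+1) \ H (j:ℕ) ∧ prof v = q
        then (1:ℕ) else 0) = if prof v = q then (q j : ℕ) else 0 := by
      intro v hv
      by_cases hq : prof v = q
      · rw [if_pos hq]
        have : ∀ u ∈ P, (if s(u,v) ∈ H ((j:ℕ)+1) \ H (j:ℕ) ∧ prof v = q then (1:ℕ) else 0)
            = if s(u,v) ∈ H ((j:ℕ)+1) \ H (j:ℕ) then 1 else 0 := by
          intro u _
          by_cases hE : s(u,v) ∈ H ((j:ℕ)+1) \ H (j:ℕ) <;> simp [hE, hq]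
        rw [Finset.sum_congr rfl this, ← Finset.card_filter, ← hincQ v hv j, hq]
      · rw [if_neg hq]
        refine Finset.sum_eq_zero fun u _ => if_neg ?_
        rintro ⟨h1, h2⟩; exact hq h2
    rw [Finset.sum_congr rfl hu1, ← Finset.sum_filter, Finset.sum_const, smul_eq_mul, hcQ]
  -- nat constraint (4)
  have hXtot : ∀ j : Fin k, ∑ p, ∑ q, cX p q j = (H ((j:ℕ)+1) \ H (j:ℕ)).card := by
    intro j
    have h1 : ∑ p, ∑ q, cX p q j
        = ((P ×ˢ Q).filter fun uv => s(uv.1, uv.2) ∈ H ((j:ℕ)+1) \ H (j:ℕ)).card := by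
      simp only [hcX, Finset.card_filter]
      refine ((Finset.sum_congr rfl fun p _ => Finset.sum_comm).trans ?_)
      rw [Finset.sum_comm]
      refine Finset.sum_congr rfl fun uv _ => ?_
      by_cases hE : s(uv.1, uv.2) ∈ H ((j:ℕ)+1) \ H (j:ℕ)
      · simp [hE, ite_and, Finset.sum_ite_eq]
      · rw [if_neg hE]
        refine Finset.sum_eq_zero fun p _ => Finset.sum_eq_zero fun q _ => if_neg ?_
        rintro ⟨h1, _, _⟩; exact hE h1
    rw [h1]
    refine Finset.card_bij (fun uv _ => s(uv.1, uv.2)) ?_ ?_ ?_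
    · intro uv huv
      exact (Finset.mem_filter.mp huv).2
    · rintro ⟨u1, v1⟩ h1 ⟨u2, v2⟩ h2 heq
      simp only [Finset.mem_filter, Finset.mem_product] at h1 h2
      rw [Sym2.eq_iff] at heq
      rcases heq with ⟨rfl, rfl⟩ | ⟨rfl, rfl⟩
      · rfl
      · exact absurd h2.1.2 (Finset.disjoint_left.mp hdisj h1.1.1)
    · intro e he
      obtain ⟨a, b, rfl, ha, hb⟩ := hbip _ (hchain ((j:ℕ)+1) (by omega) (Finset.mem_sdiff.mp he).1)
      exact ⟨(a, b), Finset.mem_filter.mpr ⟨Finset.mem_product.mpr ⟨ha, hb⟩, he⟩, rfl⟩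
  have hsumdiff : ∑ j : Fin k, (H ((j:ℕ)+1) \ H (j:ℕ)).card = Hs.card := by
    rw [Fin.sum_univ_eq_sum_range (fun i => (H (i+1) \ H i).card) k]
    have key : ∀ m ≤ k, ∑ i ∈ Finset.range m, (H (i+1) \ H i).card = (H m).card := by
      intro m hm
      induction m with
      | zero => simp [hH0]
      | succ a ih =>
        rw [Finset.sum_range_succ, ih (by omega), Finset.card_sdiff_of_subset (hmono a (by omega))]
        have := Finset.card_le_card (hmono a (by omega))
        omega
    rw [key k le_rfl, hHk]
  -- build the real solution
  refine ⟨fun p q j => (cX p q j : ℝ) / P.card,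
          fun p => (cP p : ℝ) / P.card,
          fun q => (cQ q : ℝ) / P.card,
          fun p q j => div_nonneg (Nat.cast_nonneg _) (le_of_lt hnR),
          fun p => div_nonneg (Nat.cast_nonneg _) (le_of_lt hnR),
          fun q => div_nonneg (Nat.cast_nonneg _) (le_of_lt hnR),
          ?_, ?_, ?_, ?_, ?_, ?_⟩
  · intro p q j hcond
    dsimp only
    rw [hXsupp p q j hcond]
    simp
  · intro p j
    dsimp only
    rw [Finset.sum_subset (Finset.filter_subset _ _) (fun q _ hq => by
      rw [hXsupp p q j (by simpa using hq)]; simp)]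
    rw [← Finset.sum_div, ← Nat.cast_sum, ← hC1 p j]
    push_cast
    ring
  · intro q j
    dsimp only
    rw [Finset.sum_subset (Finset.filter_subset _ _) (fun p _ hp => by
      rw [hXsupp p q j (by simpa using hp)]; simp)]
    rw [← Finset.sum_div, ← Nat.cast_sum, ← hC2 q j]
    push_cast
    ring
  · dsimp only
    rw [← Finset.sum_div, ← Nat.cast_sum, hA, div_self (ne_of_gt hnR)]
  · dsimp only
    have hstep : ∀ p q, (∑ j ∈ Finset.univ.filter
        (fun j : Fin k => ∑ i ∈ Finset.univ.filter (· ≤ j), ((p i : ℕ) + (q i : ℕ)) ≤ β),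
        (cX p q j : ℝ) / P.card) = ∑ j, (cX p q j : ℝ) / P.card := by
      intro p q
      exact Finset.sum_subset (Finset.filter_subset _ _) (fun j _ hj => by
        rw [hXsupp p q j (by simpa using hj)]; simp)
    calc (βm : ℝ) / 2 ≤ (Hs.card : ℝ) / P.card := by
          rw [div_le_div_iff₀ (by norm_num) hnR]
          nlinarith [hcard]
      _ = ∑ p, ∑ q, ∑ j, (cX p q j : ℝ) / P.card := by
          have e1 : ∀ j : Fin k, ((H ((j:ℕ)+1) \ H (j:ℕ)).card : ℝ) / P.card
              = ∑ p, ∑ q, (cX p q j : ℝ) / P.card := by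
            intro j
            rw [← hXtot j]
            push_cast
            rw [Finset.sum_div]
            refine Finset.sum_congr rfl fun p _ => ?_
            rw [Finset.sum_div]
          have e0 : ((Hs.card : ℕ) : ℝ) = ∑ j : Fin k, ((H ((j:ℕ)+1) \ H (j:ℕ)).card : ℝ) := by
            exact_mod_cast hsumdiff.symm
          calc (Hs.card : ℝ) / P.card
              = ∑ j : Fin k, ((H ((j:ℕ)+1) \ H (j:ℕ)).card : ℝ) / P.card := by
                rw [← Finset.sum_div, ← e0]
            _ = ∑ j : Fin k, ∑ p, ∑ q, (cX p q j : ℝ) / P.card :=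
                Finset.sum_congr rfl fun j _ => e1 j
            _ = ∑ p, ∑ q, ∑ j, (cX p q j : ℝ) / P.card := by
                rw [Finset.sum_comm]
                exact Finset.sum_congr rfl fun p _ => Finset.sum_comm
      _ = ∑ p, ∑ q, ∑ j ∈ Finset.univ.filter
            (fun j : Fin k => ∑ i ∈ Finset.univ.filter (· ≤ j), ((p i : ℕ) + (q i : ℕ)) ≤ β),
            (cX p q j : ℝ) / P.card := by
          refine Finset.sum_congr rfl fun p _ => Finset.sum_congr rfl fun q _ => ?_
          rw [hstep p q]
  · dsimp only
    rw [← Finset.sum_div, ← Nat.cast_sum, hB]
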